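/- arXiv:2308.05293 — 2 statements merged into one kernel-verified Lean document; each statement's English description precedes it below -/
import Mathlib

section
/- Let G be a finite connected 2-edge-connected simple graph with vertex set {P_1, …, P_n} and D = P_1 + ⋯ + P_n. If r(D) = 2 and there exist distinct indices i ≠ j such that P_i and P_j are both Galois points with respect to |D|, then G is the complete graph K_n. -/
open scoped Classical

namespace GraphDiv

variable {V : Type*}

/-- The Laplacian divisor of an integer-valued function on the vertices. -/
noncomputable def lap (G : SimpleGraph V) [Fintype V] (f : V → ℤ) : V → ℤ :=
  fun P => ∑ Q : V, if G.Adj P Q then f P - f Q else 0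

/-- Linear equivalence of divisors: `D ∼ D'` iff `D - D' = Δ(f)` for some `f`. -/
def LinEquiv (G : SimpleGraph V) [Fintype V] (D D' : V → ℤ) : Prop :=
  ∃ f : V → ℤ, D - D' = lap G f

/-- A divisor is effective if all its coefficients are nonnegative. -/
def Effective (D : V → ℤ) : Prop := ∀ P, 0 ≤ D P

/-- The degree of a divisor. -/
def degDiv [Fintype V] (D : V → ℤ) : ℤ := ∑ P : V, D P

/-- The complete linear system of a divisor. -/
def linSys (G : SimpleGraph V) [Fintype V] (D : V → ℤ) : Set (V → ℤ) :=
  {E | Effective E ∧ LinEquiv G E D}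

/-- `RankEq G D r` says the Baker–Norine rank of `D` equals `r`. -/
def RankEq (G : SimpleGraph V) [Fintype V] (D : V → ℤ) (r : ℤ) : Prop :=
  -1 ≤ r ∧
  (∀ E : V → ℤ, Effective E → degDiv E ≤ r → (linSys G (D - E)).Nonempty) ∧
  ∃ E : V → ℤ, Effective E ∧ degDiv E = r + 1 ∧ linSys G (D - E) = ∅

/-- The divisor consisting of a single vertex. -/
noncomputable def unit (P : V) : V → ℤ := fun Q => if Q = P then 1 else 0

/-- A graph is 2-edge-connected if it is connected and stays connected
after removing any single edge. -/
def TwoEdgeConnected (G : SimpleGraph V) : Prop :=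
  G.Connected ∧ ∀ v w : V, G.Adj v w → (G.deleteEdges {s(v, w)}).Connected

/-- Action of a graph automorphism on divisors. -/
def divAct {G : SimpleGraph V} (σ : G ≃g G) (D : V → ℤ) : V → ℤ :=
  fun v => D (σ.symm v)

/-- Two vertices lie in the same orbit of a subgroup of automorphisms. -/
def vrel {G : SimpleGraph V} (H : Subgroup (G ≃g G)) (v w : V) : Prop :=
  ∃ σ ∈ H, σ v = w

/-- An edge is collapsed in the quotient: its endpoints lie in the same vertex orbit. -/
def Collapsed {G : SimpleGraph V} (H : Subgroup (G ≃g G)) (e : Sym2 V) : Prop :=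
  ∃ a b : V, e = s(a, b) ∧ vrel H a b

/-- The quotient morphism `G → G/H` is harmonic: for every vertex `P`, the number of
edges at `P` lying above a given non-collapsed edge-orbit incident to the class of `P`
is independent of the choice of that edge-orbit. -/
def QuotHarmonic (G : SimpleGraph V) (H : Subgroup (G ≃g G)) : Prop :=
  ∀ (P : V) (e₁ e₂ : Sym2 V), e₁ ∈ G.edgeSet → e₂ ∈ G.edgeSet →
    (∃ σ ∈ H, P ∈ Sym2.map (⇑σ) e₁) → (∃ σ ∈ H, P ∈ Sym2.map (⇑σ) e₂) →
    ¬ Collapsed H e₁ → ¬ Collapsed H e₂ →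
    Nat.card {e : Sym2 V // e ∈ G.edgeSet ∧ P ∈ e ∧ ∃ σ ∈ H, Sym2.map (⇑σ) e = e₁} =
    Nat.card {e : Sym2 V // e ∈ G.edgeSet ∧ P ∈ e ∧ ∃ σ ∈ H, Sym2.map (⇑σ) e = e₂}

/-- `H` acts harmonically on `G`: for every subgroup `Δ ≤ H` the quotient morphism
`G → G/Δ` is harmonic. -/
def HarmonicAction (G : SimpleGraph V) (H : Subgroup (G ≃g G)) : Prop :=
  ∀ Δ : Subgroup (G ≃g G), Δ ≤ H → QuotHarmonic G Δ

/-- `P` is a Galois point with respect to `|D|`. -/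
def IsGaloisPoint (G : SimpleGraph V) [Fintype V] (D : V → ℤ) (P : V) : Prop :=
  RankEq G (D - unit P) 1 ∧
  (∀ Q : V, RankEq G (D - unit P - unit Q) 0) ∧
  ∃ H : Subgroup (G ≃g G), (Nat.card H : ℤ) = degDiv D - 1 ∧
    (∃ v w : V, ¬ vrel H v w) ∧
    HarmonicAction G H ∧
    ∃ E₁ E₂ : V → ℤ, E₁ ≠ E₂ ∧ E₁ ∈ linSys G (D - unit P) ∧ E₂ ∈ linSys G (D - unit P) ∧
      ∀ σ ∈ H, divAct σ E₁ = E₁ ∧ divAct σ E₂ = E₂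

/-- A divisor is `q`-reduced. -/
def QReduced (G : SimpleGraph V) [Fintype V] (q : V) (D : V → ℤ) : Prop :=
  (∀ P : V, P ≠ q → 0 ≤ D P) ∧
  ∀ S : Finset V, S.Nonempty → q ∉ S →
    ∃ P ∈ S, D P < (((G.neighborFinset P).filter (fun Q => Q ∉ S)).card : ℤ)

/-- The wheel graph on `m + 1` vertices: hub `none` and rim `some i` for `i : Fin m`,
with the rim a cycle via `i ↦ i + 1 (mod m)`. -/
def wheel (m : ℕ) : SimpleGraph (Option (Fin m)) where
  Adj v w :=
    match v, w with
    | none, none => False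
    | none, some _ => True
    | some _, none => True
    | some i, some j => i ≠ j ∧ ((i.val + 1) % m = j.val ∨ (j.val + 1) % m = i.val)
  symm := by
    constructor
    intro v w h
    cases v <;> cases w <;> simp_all <;> tauto
  loopless := by constructor; intro v; cases v <;> simp

/-- The 4-cycle `P₁P₂P₃P₄` with the chord `P₁P₃` (vertices `0,1,2,3`). -/
def g4 : SimpleGraph (Fin 4) :=
  SimpleGraph.fromRel (fun v w =>
    (v = 0 ∧ w = 1) ∨ (v = 1 ∧ w = 2) ∨ (v = 2 ∧ w = 3) ∨ (v = 3 ∧ w = 0) ∨ (v = 0 ∧ w = 2))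

end GraphDiv


section GaloisProofAux

open GraphDiv

variable {V : Type*}

/-- Laplacian of a difference. -/
lemma lap_sub' (G : SimpleGraph V) [Fintype V] (f g : V → ℤ) :
    lap G (f - g) = lap G f - lap G g := by
  funext v
  simp only [lap, Pi.sub_apply, ← Finset.sum_sub_distrib]
  refine Finset.sum_congr rfl fun q _ => ?_
  split_ifs <;> ring

/-- A walk from inside `S` to outside `S` crosses the boundary. -/
lemma exists_cross (G : SimpleGraph V) (S : Set V) :
    ∀ {x y : V}, G.Walk x y → x ∈ S → y ∉ S → ∃ a ∈ S, ∃ b, b ∉ S ∧ G.Adj a b := by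
  intro x y p
  induction p with
  | nil => intro hx hy; exact absurd hx hy
  | @cons x b y h q ih =>
    intro hx hy
    by_cases hb : b ∈ S
    · exact ih hb hy
    · exact ⟨x, hx, b, hb, h⟩

/-- Distinct vertices of a 2-edge-connected graph are not linearly equivalent. -/
lemma unit_eq_of_lap [Fintype V] {G : SimpleGraph V} (h2 : TwoEdgeConnected G)
    {v w : V} (g : V → ℤ) (hg : unit v - unit w = lap G g) : v = w := by
  classical
  by_contra hne
  have huniv : (Finset.univ : Finset V).Nonempty := ⟨v, Finset.mem_univ v⟩
  obtain ⟨u₀, -, hmax⟩ := Finset.exists_max_image Finset.univ g huniv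
  have hmax' : ∀ u : V, g u ≤ g u₀ := fun u => hmax u (Finset.mem_univ u)
  set M := g u₀ with hM
  by_cases hall : ∀ u, g u = M
  · have hlap0 : lap G g = 0 := by
      funext p
      refine Finset.sum_eq_zero fun q _ => ?_
      rw [hall p, hall q]; simp
    have h0 := congrFun (hg.trans hlap0) v
    simp [unit, hne] at h0
  push_neg at hall
  obtain ⟨t₀, ht₀⟩ := hall
  set S : Finset V := Finset.univ.filter (fun u => g u = M) with hSdef
  have hmemS : ∀ u, u ∈ S ↔ g u = M := fun u => by simp [hSdef]
  have hu₀S : u₀ ∈ S := (hmemS u₀).mpr rfl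
  have ht₀S : t₀ ∉ S := fun h => ht₀ ((hmemS t₀).mp h)
  obtain ⟨p⟩ := h2.1.preconnected u₀ t₀
  obtain ⟨a, haS, b, hbS, hab⟩ := exists_cross G (fun u => u ∈ S) p hu₀S ht₀S
  obtain ⟨p'⟩ := (h2.2 a b hab).preconnected u₀ t₀
  obtain ⟨a', haS', b', hbS', hab'⟩ :=
    exists_cross (G.deleteEdges {s(a, b)}) (fun u => u ∈ S) p' hu₀S ht₀S
  rw [SimpleGraph.deleteEdges_adj] at hab'
  obtain ⟨hab'G, habne⟩ := hab'
  have habne' : s(a', b') ≠ s(a, b) := by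
    intro h; exact habne (by simp [h])
  set F : V → V → ℤ := fun u t => if G.Adj u t then g u - g t else 0 with hF
  set Sc : Finset V := Finset.univ.filter (fun t => ¬ t ∈ S) with hScdef
  have hmemSc : ∀ u, u ∈ Sc ↔ u ∉ S := fun u => by simp [hScdef]
  -- split lap sums
  have hsplit : ∀ u : V, lap G g u = (∑ t ∈ S, F u t) + ∑ t ∈ Sc, F u t := by
    intro u
    have h0 := Finset.sum_filter_add_sum_filter_not Finset.univ (fun t => t ∈ S) (F u)
    have hfilter : Finset.univ.filter (fun t => t ∈ S) = S := by
      ext t; simp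
    rw [hfilter] at h0
    calc lap G g u = ∑ t : V, F u t := by simp only [lap, hF]
      _ = (∑ t ∈ S, F u t) + ∑ t ∈ Finset.univ.filter (fun t => ¬ t ∈ S), F u t := h0.symm
      _ = (∑ t ∈ S, F u t) + ∑ t ∈ Sc, F u t := rfl
  -- antisymmetric part vanishes
  have hX : (∑ u ∈ S, ∑ t ∈ S, F u t) = 0 := by
    have hanti : ∀ u t, F u t = - F t u := by
      intro u t
      simp only [hF]
      by_cases h : G.Adj u t
      · rw [if_pos h, if_pos h.symm]; ring
      · rw [if_neg h, if_neg (fun h' => h h'.symm)]; ring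
    have hcomm : (∑ u ∈ S, ∑ t ∈ S, F u t) = ∑ t ∈ S, ∑ u ∈ S, F u t :=
      Finset.sum_comm
    have : (∑ u ∈ S, ∑ t ∈ S, F u t) = - ∑ u ∈ S, ∑ t ∈ S, F u t := by
      calc (∑ u ∈ S, ∑ t ∈ S, F u t) = ∑ t ∈ S, ∑ u ∈ S, F u t := hcomm
        _ = ∑ t ∈ S, ∑ u ∈ S, - F t u := by
            refine Finset.sum_congr rfl fun t _ => Finset.sum_congr rfl fun u _ => hanti u t ▸ rfl
        _ = - ∑ t ∈ S, ∑ u ∈ S, F t u := by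
            simp [Finset.sum_neg_distrib]
    linarith
  -- crossing part is at least 2
  have hY : (2 : ℤ) ≤ ∑ u ∈ S, ∑ t ∈ Sc, F u t := by
    rw [← Finset.sum_product']
    have hpairne : ((a, b) : V × V) ≠ (a', b') := by
      intro h
      injection h with h1 h2
      apply habne'
      rw [← h1, ← h2]
    have hsub : ({(a, b), (a', b')} : Finset (V × V)) ⊆ S ×ˢ Sc := by
      intro p hp
      simp only [Finset.mem_insert, Finset.mem_singleton] at hp
      rcases hp with h | h <;> subst h <;> rw [Finset.mem_product]
      · exact ⟨haS, (hmemSc b).mpr hbS⟩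
      · exact ⟨haS', (hmemSc b').mpr hbS'⟩
    have hnonneg : ∀ p ∈ S ×ˢ Sc, (0 : ℤ) ≤ F p.1 p.2 := by
      rintro ⟨u, t⟩ hp
      rw [Finset.mem_product] at hp
      simp only [hF]
      split_ifs with h
      · have hu : g u = M := (hmemS u).mp hp.1
        have ht : g t ≤ M := hmax' t
        linarith
      · exact le_refl 0
    have hterm : ∀ (u t : V), u ∈ S → t ∉ S → G.Adj u t → (1 : ℤ) ≤ F u t := by
      intro u t hu ht hadj
      have hgu : g u = M := (hmemS u).mp hu
      have hgt : g t ≤ M := hmax' t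
      have hgt' : g t ≠ M := fun h => ht ((hmemS t).mpr h)
      simp only [hF, if_pos hadj]
      have : g t < M := lt_of_le_of_ne hgt hgt'
      omega
    calc (2 : ℤ) ≤ F a b + F a' b' := by
          have h1 := hterm a b haS hbS hab
          have h2 := hterm a' b' haS' hbS' hab'G
          linarith
      _ = ∑ p ∈ ({(a, b), (a', b')} : Finset (V × V)), F p.1 p.2 :=
          (Finset.sum_pair (f := fun p : V × V => F p.1 p.2) hpairne).symm
      _ ≤ ∑ p ∈ S ×ˢ Sc, F p.1 p.2 :=
          Finset.sum_le_sum_of_subset_of_nonneg hsub (fun p hp _ => hnonneg p hp)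
  -- the divisor side is at most 1
  have hZ : (∑ u ∈ S, (unit v - unit w) u) ≤ 1 := by
    have h1 : (∑ u ∈ S, unit v u) = if v ∈ S then 1 else 0 := by
      simp only [unit]
      exact Finset.sum_ite_eq' S v (fun _ => (1 : ℤ))
    have h2 : (∑ u ∈ S, unit w u) = if w ∈ S then 1 else 0 := by
      simp only [unit]
      exact Finset.sum_ite_eq' S w (fun _ => (1 : ℤ))
    have : (∑ u ∈ S, (unit v - unit w) u) = (∑ u ∈ S, unit v u) - ∑ u ∈ S, unit w u := by
      rw [← Finset.sum_sub_distrib]; rfl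
    rw [this, h1, h2]
    split_ifs <;> norm_num
  -- combine
  have hcontr : (2 : ℤ) ≤ ∑ u ∈ S, (unit v - unit w) u := by
    have : (∑ u ∈ S, (unit v - unit w) u) = ∑ u ∈ S, lap G g u := by
      refine Finset.sum_congr rfl fun u _ => ?_
      rw [hg]
    rw [this]
    have : (∑ u ∈ S, lap G g u)
        = (∑ u ∈ S, ∑ t ∈ S, F u t) + ∑ u ∈ S, ∑ t ∈ Sc, F u t := by
      rw [← Finset.sum_add_distrib]
      exact Finset.sum_congr rfl fun u _ => hsplit u
    rw [this, hX, zero_add]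
    exact hY
  linarith

/-- The Laplacian is equivariant under graph automorphisms. -/
lemma lap_comp' [Fintype V] {G : SimpleGraph V} (σ : G ≃g G) (f : V → ℤ) (x : V) :
    lap G f (σ.symm x) = lap G (fun u => f (σ.symm u)) x := by
  classical
  simp only [lap]
  refine (Fintype.sum_equiv σ.symm.toEquiv _ _ fun u => ?_).symm
  have hadj : G.Adj x u ↔ G.Adj (σ.symm x) (σ.symm u) := (σ.symm.map_rel_iff).symm
  show (if G.Adj x u then f (σ.symm x) - f (σ.symm u) else 0)
      = if G.Adj (σ.symm x) (σ.symm u) then f (σ.symm x) - f (σ.symm u) else 0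
  by_cases h : G.Adj x u
  · rw [if_pos h, if_pos (hadj.mp h)]
  · rw [if_neg h, if_neg (fun h' => h (hadj.mpr h'))]

/-- Every element of the Galois group fixes the Galois point. -/
lemma galois_fixes [Fintype V] {G : SimpleGraph V} (h2 : TwoEdgeConnected G)
    {P : V} {E₁ : V → ℤ} (hE₁ : E₁ ∈ linSys G ((fun _ => 1) - unit P))
    (σ : G ≃g G) (hfix : divAct σ E₁ = E₁) : σ P = P := by
  obtain ⟨-, f, hf⟩ := hE₁
  have hiff : ∀ x : V, (σ.symm x = P ↔ x = σ P) := by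
    intro x
    constructor
    · intro h; rw [← h, RelIso.apply_symm_apply]
    · intro h; rw [h, RelIso.symm_apply_apply]
  have hf' : E₁ - ((fun _ => 1) - unit (σ P)) = lap G (fun u => f (σ.symm u)) := by
    funext x
    have h1 := congrFun hf (σ.symm x)
    have h2 : E₁ (σ.symm x) = E₁ x := congrFun hfix x
    have h3 : unit P (σ.symm x) = unit (σ P) x := by
      simp only [unit]
      by_cases h : σ.symm x = P
      · rw [if_pos h, if_pos ((hiff x).mp h)]
      · rw [if_neg h, if_neg (fun h' => h ((hiff x).mpr h'))]
    have h4 := lap_comp' σ f x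
    simp only [Pi.sub_apply] at h1 ⊢
    rw [← h4, ← h3, ← h2]
    exact h1
  have hdiff : unit (σ P) - unit P = lap G ((fun u => f (σ.symm u)) - f) := by
    rw [lap_sub']
    rw [← hf', ← hf]
    funext x
    simp only [Pi.sub_apply]
    ring
  exact unit_eq_of_lap h2 _ hdiff

/-- If an element of a harmonically acting group fixes a vertex and one of its
neighbors, it fixes all neighbors of that vertex. -/
lemma fix_nbr_all [Fintype V] {G : SimpleGraph V} {H : Subgroup (G ≃g G)}
    (hh : HarmonicAction G H) {σ : G ≃g G} (hσ : σ ∈ H)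
    {x y : V} (hxy : G.Adj x y) (hx : σ x = x) (hy : σ y = y)
    {z : V} (hxz : G.Adj x z) : σ z = z := by
  classical
  by_contra hzne
  -- the stabilizer of x and y is a subgroup containing σ
  set K : Subgroup (G ≃g G) :=
    { carrier := {τ | τ x = x ∧ τ y = y}
      one_mem' := ⟨rfl, rfl⟩
      mul_mem' := by
        rintro a b ⟨ha1, ha2⟩ ⟨hb1, hb2⟩
        refine ⟨?_, ?_⟩
        · show a (b x) = x; rw [hb1, ha1]
        · show a (b y) = y; rw [hb2, ha2]
      inv_mem' := by
        rintro a ⟨h1, h2⟩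
        refine ⟨?_, ?_⟩
        · show a⁻¹ x = x; conv_lhs => rw [← h1]
          exact RelIso.inv_apply_self a x
        · show a⁻¹ y = y; conv_lhs => rw [← h2]
          exact RelIso.inv_apply_self a y } with hKdef
  have hσK : σ ∈ K := ⟨hx, hy⟩
  have hK : ∀ τ ∈ Subgroup.zpowers σ, τ x = x ∧ τ y = y :=
    fun τ hτ => Subgroup.zpowers_le.mpr hσK hτ
  set Δ : Subgroup (G ≃g G) := Subgroup.zpowers σ with hΔdef
  have hΔH : Δ ≤ H := Subgroup.zpowers_le.mpr hσ
  have hq := hh Δ hΔH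
  have hxy' : x ≠ y := G.ne_of_adj hxy
  have hxz' : x ≠ z := G.ne_of_adj hxz
  have he1 : s(x, y) ∈ G.edgeSet := G.mem_edgeSet.mpr hxy
  have he2 : s(x, z) ∈ G.edgeSet := G.mem_edgeSet.mpr hxz
  have hone : ∀ e : Sym2 V, Sym2.map (⇑(1 : G ≃g G)) e = e := by
    intro e
    rw [RelIso.coe_one, Sym2.map_id]
    rfl
  have hinc1 : ∃ τ ∈ Δ, x ∈ Sym2.map (⇑τ) s(x, y) :=
    ⟨1, Subgroup.one_mem Δ, by rw [hone]; exact Sym2.mem_mk_left x y⟩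
  have hinc2 : ∃ τ ∈ Δ, x ∈ Sym2.map (⇑τ) s(x, z) :=
    ⟨1, Subgroup.one_mem Δ, by rw [hone]; exact Sym2.mem_mk_left x z⟩
  have hnc1 : ¬ Collapsed Δ s(x, y) := by
    rintro ⟨a, b, heq, τ, hτ, hab⟩
    obtain ⟨hτx, hτy⟩ := hK τ hτ
    rcases Sym2.eq_iff.mp heq with ⟨h1, h2⟩ | ⟨h1, h2⟩
    · apply hxy'; rw [h2, ← hab, ← h1, hτx]
    · apply hxy'; rw [h1, ← hab, ← h2, hτy]
  have hnc2 : ¬ Collapsed Δ s(x, z) := by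
    rintro ⟨a, b, heq, τ, hτ, hab⟩
    obtain ⟨hτx, -⟩ := hK τ hτ
    rcases Sym2.eq_iff.mp heq with ⟨h1, h2⟩ | ⟨h1, h2⟩
    · apply hxz'; rw [h2, ← hab, ← h1, hτx]
    · -- x = b, z = a : τ z = x hence z = τ⁻¹ x = x
      obtain ⟨hτix, -⟩ := hK τ⁻¹ (Subgroup.inv_mem Δ hτ)
      apply hxz'
      rw [← h2] at hab
      rw [← h1] at hab
      have h3 : τ⁻¹ (τ z) = τ⁻¹ x := by rw [hab]
      rw [RelIso.inv_apply_self, hτix] at h3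
      exact h3.symm
  have hcard := hq x s(x, y) s(x, z) he1 he2 hinc1 hinc2 hnc1 hnc2
  -- the first fiber is a singleton
  have hfix_pair : ∀ τ ∈ Δ, Sym2.map (⇑τ) s(x, y) = s(x, y) := by
    intro τ hτ
    obtain ⟨h1, h2⟩ := hK τ hτ
    rw [Sym2.map_pair_eq, h1, h2]
  have hcard1 : Nat.card {e : Sym2 V // e ∈ G.edgeSet ∧ x ∈ e ∧
      ∃ τ ∈ Δ, Sym2.map (⇑τ) e = s(x, y)} = 1 := by
    rw [Nat.card_eq_one_iff_unique]
    constructor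
    · constructor
      rintro ⟨e, he, hxe, τ, hτ, hmap⟩ ⟨e', he', hxe', τ', hτ', hmap'⟩
      have key : ∀ (e₀ : Sym2 V) (τ₀ : G ≃g G), τ₀ ∈ Δ → Sym2.map (⇑τ₀) e₀ = s(x, y) →
          e₀ = s(x, y) := by
        intro e₀ τ₀ hτ₀ hm
        have h1 : Sym2.map (⇑τ₀⁻¹) (Sym2.map (⇑τ₀) e₀) = Sym2.map (⇑τ₀⁻¹) s(x, y) := by
          rw [hm]
        rw [Sym2.map_map] at h1
        have h2 : (⇑τ₀⁻¹ ∘ ⇑τ₀) = id := by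
          funext u; exact RelIso.inv_apply_self τ₀ u
        rw [h2, Sym2.map_id] at h1
        rw [hfix_pair τ₀⁻¹ (Subgroup.inv_mem Δ hτ₀)] at h1
        exact h1
      have := (key e τ hτ hmap).trans (key e' τ' hτ' hmap').symm
      exact Subtype.ext this
    · exact ⟨⟨s(x, y), he1, Sym2.mem_mk_left x y, 1, Subgroup.one_mem Δ, hone _⟩⟩
  -- the second fiber has at least two elements
  have hmem1 : s(x, z) ∈ G.edgeSet ∧ x ∈ s(x, z) ∧
      ∃ τ ∈ Δ, Sym2.map (⇑τ) s(x, z) = s(x, z) :=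
    ⟨he2, Sym2.mem_mk_left x z, 1, Subgroup.one_mem Δ, hone _⟩
  have hsymmx : σ.symm x = x := by
    conv_lhs => rw [← hx]
    exact RelIso.symm_apply_apply σ x
  have hadj2 : G.Adj x (σ.symm z) := by
    have := σ.symm.map_rel_iff.mpr hxz
    rwa [hsymmx] at this
  have hmem2 : s(x, σ.symm z) ∈ G.edgeSet ∧ x ∈ s(x, σ.symm z) ∧
      ∃ τ ∈ Δ, Sym2.map (⇑τ) s(x, σ.symm z) = s(x, z) := by
    refine ⟨G.mem_edgeSet.mpr hadj2, Sym2.mem_mk_left _ _,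
      σ, Subgroup.mem_zpowers σ, ?_⟩
    rw [Sym2.map_pair_eq, hx, RelIso.apply_symm_apply]
  have hne12 : s(x, z) ≠ s(x, σ.symm z) := by
    intro h
    rcases Sym2.eq_iff.mp h with ⟨-, h2⟩ | ⟨h1, h2⟩
    · apply hzne
      nth_rewrite 1 [h2]
      rw [RelIso.apply_symm_apply]
    · exact hxz' h2.symm
  have hnontriv : Nontrivial {e : Sym2 V // e ∈ G.edgeSet ∧ x ∈ e ∧
      ∃ τ ∈ Δ, Sym2.map (⇑τ) e = s(x, z)} :=
    ⟨⟨s(x, z), hmem1⟩, ⟨s(x, σ.symm z), hmem2⟩, fun h => hne12 (congrArg Subtype.val h)⟩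
  have h2lt : 1 < Nat.card {e : Sym2 V // e ∈ G.edgeSet ∧ x ∈ e ∧
      ∃ τ ∈ Δ, Sym2.map (⇑τ) e = s(x, z)} :=
    Finite.one_lt_card_iff_nontrivial.mpr hnontriv
  rw [hcard1] at hcard
  omega

/-- Propagation of fixed points along walks. -/
lemma fix_all_walk [Fintype V] {G : SimpleGraph V} {H : Subgroup (G ≃g G)}
    (hh : HarmonicAction G H) {σ : G ≃g G} (hσ : σ ∈ H) :
    ∀ {x u : V}, G.Walk x u → σ x = x → (∃ y, G.Adj x y ∧ σ y = y) → σ u = u := by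
  intro x u p
  induction p with
  | nil => intro hx _; exact hx
  | @cons x b u h q ih =>
    rintro hx ⟨y, hxy, hy⟩
    have hb : σ b = b := fix_nbr_all hh hσ hxy hx hy h
    exact ih hb ⟨x, h.symm, hx⟩

/-- An element of a harmonically acting group fixing an edge pointwise is trivial. -/
lemma fix_eq_one [Fintype V] {G : SimpleGraph V} (hconn : G.Connected)
    {H : Subgroup (G ≃g G)} (hh : HarmonicAction G H) {σ : G ≃g G} (hσ : σ ∈ H)
    {x y : V} (hxy : G.Adj x y) (hx : σ x = x) (hy : σ y = y) : σ = 1 := by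
  have hall : ∀ u : V, σ u = u := by
    intro u
    obtain ⟨p⟩ := hconn.preconnected x u
    exact fix_all_walk hh hσ p hx ⟨y, hxy, hy⟩
  exact RelIso.ext hall

/-- The key structure theorem for a Galois point: it is adjacent to every other
vertex, and its Galois group acts transitively on the remaining vertices. -/
lemma galois_main [Fintype V] {G : SimpleGraph V} (h2 : TwoEdgeConnected G)
    {P : V} (hP : IsGaloisPoint G (fun _ => 1) P) :
    (∀ v : V, v ≠ P → G.Adj P v) ∧
    (∀ v w : V, v ≠ P → w ≠ P → ∃ σ : G ≃g G, σ P = P ∧ σ v = w) := by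
  classical
  obtain ⟨-, -, H, hcard, -, hharm, E₁, E₂, -, hE₁, -, hfixE⟩ := hP
  have hPfix : ∀ σ ∈ H, σ P = P := fun σ hσ =>
    galois_fixes h2 hE₁ σ (hfixE σ hσ).1
  by_cases hn : ∃ v₀ : V, v₀ ≠ P
  swap
  · push_neg at hn
    constructor
    · intro v hv; exact absurd (hn v) hv
    · intro v w hv _; exact absurd (hn v) hv
  obtain ⟨v₀, hv₀⟩ := hn
  -- P has a neighbor
  obtain ⟨p⟩ := h2.1.preconnected P v₀
  obtain ⟨w₀, hw₀⟩ : ∃ w₀ : V, G.Adj P w₀ := by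
    cases p with
    | nil => exact absurd rfl (Ne.symm hv₀)
    | cons h q => exact ⟨_, h⟩
  have hw₀P : w₀ ≠ P := (G.ne_of_adj hw₀).symm
  -- finiteness
  haveI : Finite (G ≃g G) := Finite.of_injective
    (fun σ : G ≃g G => σ.toEquiv) (fun _ _ h => RelIso.toEquiv_injective h)
  haveI : Fintype ↥H := Fintype.ofFinite _
  -- the orbit map
  have himg : ∀ σ : G ≃g G, σ ∈ H → σ w₀ ≠ P := by
    intro σ hσ h
    have h1 : σ⁻¹ (σ w₀) = σ⁻¹ P := by rw [h]
    rw [RelIso.inv_apply_self] at h1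
    rw [hPfix σ⁻¹ (Subgroup.inv_mem H hσ)] at h1
    exact hw₀P h1
  set φ : ↥H → {v : V // v ≠ P} := fun σ => ⟨σ.1 w₀, himg σ.1 σ.2⟩ with hφdef
  have hinj : Function.Injective φ := by
    intro σ τ h
    have h0 : σ.1 w₀ = τ.1 w₀ := congrArg Subtype.val h
    set ρ : G ≃g G := σ.1⁻¹ * τ.1 with hρdef
    have hρH : ρ ∈ H := Subgroup.mul_mem H (Subgroup.inv_mem H σ.2) τ.2
    have hρw : ρ w₀ = w₀ := by
      show σ.1⁻¹ (τ.1 w₀) = w₀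
      rw [← h0, RelIso.inv_apply_self]
    have hρP : ρ P = P := hPfix ρ hρH
    have hρ1 : ρ = 1 := fix_eq_one h2.1 hharm hρH hw₀ hρP hρw
    have : σ.1⁻¹ * τ.1 = 1 := hρ1
    have := inv_mul_eq_one.mp this
    exact Subtype.ext this
  -- cardinality count
  haveI : Nonempty V := ⟨P⟩
  have hcardV : degDiv (fun _ => (1 : ℤ) : V → ℤ) = (Fintype.card V : ℤ) := by
    simp [degDiv]
  have hcardH : Nat.card ↥H = Fintype.card V - 1 := by
    rw [hcardV] at hcard
    have h1 : 1 ≤ Fintype.card V := Fintype.card_pos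
    have h2 : ((Fintype.card V - 1 : ℕ) : ℤ) = (Fintype.card V : ℤ) - 1 := by
      push_cast [Nat.cast_sub h1]
      ring
    exact Nat.cast_injective (hcard.trans h2.symm)
  have hcardT : Fintype.card {v : V // v ≠ P} = Fintype.card V - 1 := by
    have h := Fintype.card_subtype_compl (fun v : V => v = P)
    rw [Fintype.card_subtype_eq] at h
    convert h using 2
  have hbij : Function.Bijective φ := by
    rw [Fintype.bijective_iff_injective_and_card]
    refine ⟨hinj, ?_⟩
    rw [hcardT, ← hcardH, Nat.card_eq_fintype_card]
  -- surjectivity: every vertex other than P is in the orbit of w₀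
  have hsurj : ∀ v : V, v ≠ P → ∃ σ : G ≃g G, σ ∈ H ∧ σ w₀ = v := by
    intro v hv
    obtain ⟨σ, hσ⟩ := hbij.2 ⟨v, hv⟩
    exact ⟨σ.1, σ.2, congrArg Subtype.val hσ⟩
  constructor
  · intro v hv
    obtain ⟨σ, hσH, hσw⟩ := hsurj v hv
    have := σ.map_rel_iff.mpr hw₀
    rwa [hPfix σ hσH, hσw] at this
  · intro v w hv hw
    obtain ⟨σ, hσH, hσw⟩ := hsurj v hv
    obtain ⟨τ, hτH, hτw⟩ := hsurj w hw
    refine ⟨τ * σ⁻¹, ?_, ?_⟩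
    · show τ (σ⁻¹ P) = P
      rw [hPfix σ⁻¹ (Subgroup.inv_mem H hσH), hPfix τ hτH]
    · show τ (σ⁻¹ v) = w
      rw [← hσw, RelIso.inv_apply_self, hτw]

end GaloisProofAux


open GraphDiv in
/-- If `D` is the sum of all vertices of a 2-edge-connected graph, `r(D) = 2`,
and two distinct vertices are Galois points with respect to `|D|`, then the
graph is complete. -/
theorem stmt15 {V : Type*} [Fintype V] (G : SimpleGraph V)
    (h2 : TwoEdgeConnected G)
    (hrank : RankEq G (fun _ => 1) 2)
    (P Q : V) (hPQ : P ≠ Q)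
    (hP : IsGaloisPoint G (fun _ => 1) P)
    (hQ : IsGaloisPoint G (fun _ => 1) Q) :
    G = ⊤ := by
  
  obtain ⟨hPadj, hPtrans⟩ := galois_main h2 hP
  obtain ⟨hQadj, hQtrans⟩ := galois_main h2 hQ
  ext v w
  simp only [SimpleGraph.top_adj]
  constructor
  · exact fun h => G.ne_of_adj h
  · intro hvw
    by_cases hvP : v = P
    · subst hvP
      exact hPadj w (fun h => hvw h.symm)
    by_cases hwP : w = P
    · subst hwP
      exact (hPadj v hvP).symm
    by_cases hvQ : v = Q
    · subst hvQ
      exact hQadj w (fun h => hvw h.symm)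
    by_cases hwQ : w = Q
    · subst hwQ
      exact (hQadj v hvQ).symm
    obtain ⟨σ, hσP, hσQ⟩ := hPtrans Q v (Ne.symm hPQ) hvP
    have hu : σ.symm w ≠ Q := by
      intro h
      apply hvw
      rw [← hσQ, ← h, RelIso.apply_symm_apply]
    have hadj : G.Adj Q (σ.symm w) := hQadj _ hu
    have h2' := σ.map_rel_iff.mpr hadj
    rwa [hσQ, RelIso.apply_symm_apply] at h2'
end

section
/- Let G be the graph with vertices P_1, P_2, P_3, P_4 and edges {P_1P_2, P_2P_3, P_3P_4, P_4P_1, P_1P_3}, and let D = P_1 + P_2 + P_3 + P_4. Then r(D) = 2 but no vertex of G is a Galois point with respect to |D|. -/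
open scoped Classical

namespace GraphDiv

instance : DecidableRel g4.Adj := fun v w =>
  decidable_of_iff _ (SimpleGraph.fromRel_adj _ v w).symm

lemma nonadj (a b : Fin 4) (h1 : a ≠ b) (h2 : ¬ g4.Adj a b) :
    (a = 1 ∧ b = 3) ∨ (a = 3 ∧ b = 1) := by revert h1 h2; revert a b; decide

lemma sq_eq_one (σ : g4 ≃g g4) (v : Fin 4) : σ (σ v) = v := by
  have h13 : (σ 1 = 1 ∧ σ 3 = 3) ∨ (σ 1 = 3 ∧ σ 3 = 1) := by
    have h1 : σ 1 ≠ σ 3 := fun h => by simpa using σ.injective h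
    have h2 : ¬ g4.Adj (σ 1) (σ 3) := by
      rw [σ.map_adj_iff]; decide
    exact nonadj _ _ h1 h2
  have h02 : (σ 0 = 0 ∧ σ 2 = 2) ∨ (σ 0 = 2 ∧ σ 2 = 0) := by
    have e01 : σ 0 ≠ σ 1 := fun h => by simpa using σ.injective h
    have e03 : σ 0 ≠ σ 3 := fun h => by simpa using σ.injective h
    have e21 : σ 2 ≠ σ 1 := fun h => by simpa using σ.injective h
    have e23 : σ 2 ≠ σ 3 := fun h => by simpa using σ.injective h
    have e02 : σ 0 ≠ σ 2 := fun h => by simpa using σ.injective h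
    revert e01 e03 e21 e23 e02 h13
    generalize σ 0 = a; generalize σ 1 = b; generalize σ 2 = c; generalize σ 3 = d
    revert a b c d; decide
  fin_cases v
  · rcases h02 with ⟨g, g'⟩ | ⟨g, g'⟩ <;> simp [g, g']
  · rcases h13 with ⟨h, h'⟩ | ⟨h, h'⟩ <;> simp [h, h']
  · rcases h02 with ⟨g, g'⟩ | ⟨g, g'⟩ <;> simp [g, g']
  · rcases h13 with ⟨h, h'⟩ | ⟨h, h'⟩ <;> simp [h, h']

lemma no_card_three (H : Subgroup (g4 ≃g g4)) : Nat.card H ≠ 3 := by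
  intro h3
  have hall : ∀ x : H, x = 1 := by
    intro x
    have hcoe : ((x : g4 ≃g g4)) * x = 1 := by
      apply RelIso.ext
      intro v
      exact sq_eq_one _ v
    have hx2 : x ^ 2 = 1 := by
      apply Subtype.ext
      push_cast
      rw [pow_two]
      exact hcoe
    have h2 : orderOf x ∣ 2 := orderOf_dvd_of_pow_eq_one hx2
    have h3' : orderOf x ∣ 3 := h3 ▸ orderOf_dvd_natCard x
    have : orderOf x ∣ 1 := (Nat.dvd_gcd h2 h3' : _)
    rw [Nat.dvd_one] at this
    exact orderOf_eq_one_iff.mp this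
  have : Nat.card H = 1 := by
    rw [Nat.card_eq_one_iff_unique]
    exact ⟨⟨fun a b => by rw [hall a, hall b]⟩, ⟨1⟩⟩
  omega

lemma lap_explicit (f : Fin 4 → ℤ) : lap g4 f =
    ![3*f 0 - f 1 - f 2 - f 3, 2*f 1 - f 0 - f 2, 3*f 2 - f 0 - f 1 - f 3, 2*f 3 - f 0 - f 2] := by
  funext P
  fin_cases P <;>
  · simp [lap, Fin.sum_univ_four, g4, SimpleGraph.fromRel_adj]
    ring

lemma eff_of (F : Fin 4 → ℤ) (h : 0 ≤ F 0 ∧ 0 ≤ F 1 ∧ 0 ≤ F 2 ∧ 0 ≤ F 3) :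
    Effective F := by
  intro v; fin_cases v <;> tauto

lemma mono {V : Type*} [Fintype V] (G : SimpleGraph V) (D E E' : V → ℤ)
    (hle : ∀ v, E v ≤ E' v) (h : (linSys G (D - E')).Nonempty) :
    (linSys G (D - E)).Nonempty := by
  obtain ⟨F, hF, f, hf⟩ := h
  refine ⟨F + (E' - E), fun v => ?_, f, ?_⟩
  · have h1 := hF v
    have h2 := hle v
    simp only [Pi.add_apply, Pi.sub_apply]
    omega
  · funext v
    have := congrFun hf v
    simp only [Pi.add_apply, Pi.sub_apply] at this ⊢
    omega

/-- A computable version of `unit`. -/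
def cunit (P : Fin 4) : Fin 4 → ℤ := fun Q => if decide (Q = P) = true then 1 else 0

lemma unit_eq_cunit (P : Fin 4) : unit P = cunit P := by
  funext v
  simp [unit, cunit, decide_eq_true_iff]

lemma key (P Q : Fin 4) :
    (linSys g4 ((fun _ => (1:ℤ)) - (fun v => unit P v + unit Q v))).Nonempty := by
  fin_cases P <;> fin_cases Q
  case _ => exact ⟨![2,0,0,0], eff_of _ (by decide), ![1,0,0,0], by
    rw [lap_explicit]; funext v; fin_cases v <;> simp [unit] <;> norm_num⟩
  case _ => exact ⟨![0,0,1,1], eff_of _ (by decide), ![0,0,0,0], by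
    rw [lap_explicit]; funext v; fin_cases v <;> simp [unit] <;> norm_num⟩
  case _ => exact ⟨![0,1,0,1], eff_of _ (by decide), ![0,0,0,0], by
    rw [lap_explicit]; funext v; fin_cases v <;> simp [unit] <;> norm_num⟩
  case _ => exact ⟨![0,1,1,0], eff_of _ (by decide), ![0,0,0,0], by
    rw [lap_explicit]; funext v; fin_cases v <;> simp [unit] <;> norm_num⟩
  case _ => exact ⟨![0,0,1,1], eff_of _ (by decide), ![0,0,0,0], by
    rw [lap_explicit]; funext v; fin_cases v <;> simp [unit] <;> norm_num⟩
  case _ => exact ⟨![0,1,0,1], eff_of _ (by decide), ![0,1,0,0], by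
    rw [lap_explicit]; funext v; fin_cases v <;> simp [unit] <;> norm_num⟩
  case _ => exact ⟨![1,0,0,1], eff_of _ (by decide), ![0,0,0,0], by
    rw [lap_explicit]; funext v; fin_cases v <;> simp [unit] <;> norm_num⟩
  case _ => exact ⟨![1,0,1,0], eff_of _ (by decide), ![0,0,0,0], by
    rw [lap_explicit]; funext v; fin_cases v <;> simp [unit] <;> norm_num⟩
  case _ => exact ⟨![0,1,0,1], eff_of _ (by decide), ![0,0,0,0], by
    rw [lap_explicit]; funext v; fin_cases v <;> simp [unit] <;> norm_num⟩
  case _ => exact ⟨![1,0,0,1], eff_of _ (by decide), ![0,0,0,0], by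
    rw [lap_explicit]; funext v; fin_cases v <;> simp [unit] <;> norm_num⟩
  case _ => exact ⟨![0,0,2,0], eff_of _ (by decide), ![0,0,1,0], by
    rw [lap_explicit]; funext v; fin_cases v <;> simp [unit] <;> norm_num⟩
  case _ => exact ⟨![1,1,0,0], eff_of _ (by decide), ![0,0,0,0], by
    rw [lap_explicit]; funext v; fin_cases v <;> simp [unit] <;> norm_num⟩
  case _ => exact ⟨![0,1,1,0], eff_of _ (by decide), ![0,0,0,0], by
    rw [lap_explicit]; funext v; fin_cases v <;> simp [unit] <;> norm_num⟩
  case _ => exact ⟨![1,0,1,0], eff_of _ (by decide), ![0,0,0,0], by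
    rw [lap_explicit]; funext v; fin_cases v <;> simp [unit] <;> norm_num⟩
  case _ => exact ⟨![1,1,0,0], eff_of _ (by decide), ![0,0,0,0], by
    rw [lap_explicit]; funext v; fin_cases v <;> simp [unit] <;> norm_num⟩
  case _ => exact ⟨![0,1,0,1], eff_of _ (by decide), ![0,0,0,1], by
    rw [lap_explicit]; funext v; fin_cases v <;> simp [unit] <;> norm_num⟩

lemma dominate (E : Fin 4 → ℤ) (hE : Effective E) (hdeg : degDiv E ≤ 2) :
    ∃ P Q : Fin 4, ∀ v, E v ≤ unit P v + unit Q v := by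
  simp only [unit_eq_cunit]
  have hrw : E = ![E 0, E 1, E 2, E 3] := by
    funext v; fin_cases v <;> rfl
  have h0 := hE 0; have h1 := hE 1; have h2 := hE 2; have h3 := hE 3
  have hsum : E 0 + E 1 + E 2 + E 3 ≤ 2 := by
    simpa [degDiv, Fin.sum_univ_four] using hdeg
  rw [hrw]
  revert h0 h1 h2 h3 hsum
  generalize E 0 = a; generalize E 1 = b; generalize E 2 = c; generalize E 3 = d
  intro h0 h1 h2 h3 hsum
  have ha : a ≤ 2 := by omega
  interval_cases a <;>
    (have hb : b ≤ 2 := by omega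
     interval_cases b <;>
       (have hc : c ≤ 2 := by omega
        interval_cases c <;>
          (have hd : d ≤ 2 := by omega
           interval_cases d <;> first | omega | decide)))

end GraphDiv

open GraphDiv in
/-- For the 4-cycle with one chord and `D = P₁ + P₂ + P₃ + P₄`, one has
`r(D) = 2` but no vertex is a Galois point with respect to `|D|`. -/
theorem stmt17 :
    RankEq g4 (fun _ => 1) 2 ∧
    ∀ P : Fin 4, ¬ IsGaloisPoint g4 (fun _ => 1) P := by
  constructor
  · refine ⟨by norm_num, ?_, ?_⟩
    · intro E hEeff hEdeg
      obtain ⟨P, Q, hle⟩ := dominate E hEeff hEdeg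
      exact mono g4 _ E (fun v => unit P v + unit Q v) hle (key P Q)
    · refine ⟨![0,2,1,0], eff_of _ (by decide), by simp [degDiv, Fin.sum_univ_four], ?_⟩
      rw [Set.eq_empty_iff_forall_notMem]
      rintro F ⟨hFeff, f, hf⟩
      rw [lap_explicit] at hf
      have h0 := congrFun hf 0
      have h1 := congrFun hf 1
      have h2 := congrFun hf 2
      have h3 := congrFun hf 3
      simp only [Pi.sub_apply, Matrix.cons_val_zero, Matrix.cons_val_one, Matrix.head_cons,
        Matrix.cons_val_two, Matrix.tail_cons, Matrix.cons_val_three] at h0 h1 h2 h3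
      have e0 := hFeff 0; have e1 := hFeff 1; have e2 := hFeff 2; have e3 := hFeff 3
      have hk : F 1 + 2*F 2 + 5*F 3 = 4 + 8*(f 3 - f 0) := by linear_combination h1 + 2*h2 + 5*h3
      have hdg : F 0 + F 1 + F 2 + F 3 = 1 := by linear_combination h0 + h1 + h2 + h3
      clear h0 h1 h2 h3 hf hFeff
      rcases (by omega : F 1 = 0 ∨ F 1 = 1) with h | h <;>
        rcases (by omega : F 2 = 0 ∨ F 2 = 1) with h' | h' <;>
          rcases (by omega : F 3 = 0 ∨ F 3 = 1) with h'' | h'' <;> omega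
  · intro P hP
    obtain ⟨_, _, H, hcard, _⟩ := hP
    have hd : degDiv (fun _ => (1:ℤ) : Fin 4 → ℤ) = 4 := by
      simp [degDiv, Fin.sum_univ_four]
    rw [hd] at hcard
    norm_num at hcard
    have : Nat.card H = 3 := by exact_mod_cast hcard
    exact no_card_three H this
end
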